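/- (Goldman–Joichi–White) For two Ferrers boards B_1 and B_2, both with n columns, B_1 and B_2 are rook equivalent if and only if the root vector ξ(B_2) is a rearrangement (permutation) of the entries of the root vector ξ(B_1). -/

import Mathlib

/-- A (non-attacking) rook placement on the board with column heights `b`:
a set of cells (column, row) inside the board, no two sharing a column or a row.
Cells are 0-indexed: cell `(i, j)` lies in the board iff `j < b i`. -/
def IsRookPlacement {n : ℕ} (b : Fin n → ℕ) (P : Finset (Fin n × ℕ)) : Prop :=
  (∀ c ∈ P, c.2 < b c.1) ∧
  ∀ c ∈ P, ∀ d ∈ P, c ≠ d → c.1 ≠ d.1 ∧ c.2 ≠ d.2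

/-- The `k`-th rook number of the board `b`: the number of placements of `k`
non-attacking rooks on `b`. -/
noncomputable def rookNum {n : ℕ} (b : Fin n → ℕ) (k : ℕ) : ℕ :=
  Set.ncard {P : Finset (Fin n × ℕ) | IsRookPlacement b P ∧ P.card = k}

/-- Two boards are rook equivalent if all their rook numbers agree. -/
def RookEquiv {n₁ n₂ : ℕ} (b₁ : Fin n₁ → ℕ) (b₂ : Fin n₂ → ℕ) : Prop :=
  ∀ k, rookNum b₁ k = rookNum b₂ k

/-- The root vector of a board: the (0-indexed) `i`-th entry is `i - b i`
(1-indexed: `(i-1) - b_i`). -/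
def rootVec {n : ℕ} (b : Fin n → ℕ) : Fin n → ℤ := fun i => (i : ℤ) - (b i : ℤ)

/-- `b₁` is obtained from `b₂` by moving `k > 0` squares out of one column into a
single other column: the boards agree except in columns `i` and `j`, where `b₁`
has `k` more squares in column `i` and `k` fewer in column `j`. -/
def MovesSquares {n : ℕ} (b₁ b₂ : Fin n → ℕ) : Prop :=
  ∃ (i j : Fin n) (k : ℕ), i ≠ j ∧ 0 < k ∧ b₁ i = b₂ i + k ∧ b₂ j = b₁ j + k ∧
    ∀ l, l ≠ i → l ≠ j → b₁ l = b₂ l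

/-- A Ferrers board with `n` columns: a weakly increasing sequence of column heights. -/
def FerrersBoard (n : ℕ) : Type := {b : Fin n → ℕ // Monotone b}

/-- The rook equivalence graph of the equivalence class of `B`: vertices are the
Ferrers boards with `n` columns rook equivalent to `B`; two distinct boards are
adjacent when one is obtained from the other by moving squares out of one column
into a single other column. -/
def rookEquivGraph {n : ℕ} (B : FerrersBoard n) :
    SimpleGraph {C : FerrersBoard n // RookEquiv C.1 B.1} :=
  SimpleGraph.fromRel fun C D => MovesSquares C.1.1 D.1.1

/-- `entryCount b k` is `v_k`, the number of entries of the root vector of `b`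
equal to `k`. -/
def entryCount {n : ℕ} (b : Fin n → ℕ) (k : ℕ) : ℕ :=
  (Finset.univ.filter fun l => rootVec b l = (k : ℤ)).card

namespace GJW

open Finset Polynomial

open Classical in
noncomputable def placements {n : ℕ} (b : Fin n → ℕ) (k : ℕ) : Finset (Finset (Fin n × ℕ)) :=
  (Finset.univ ×ˢ Finset.range (Finset.univ.sup b)).powerset.filter
    (fun P => IsRookPlacement b P ∧ P.card = k)

lemma mem_placements {n : ℕ} {b : Fin n → ℕ} {k : ℕ} {P : Finset (Fin n × ℕ)} :
    P ∈ placements b k ↔ IsRookPlacement b P ∧ P.card = k := by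
  classical
  simp only [placements, Finset.mem_filter, Finset.mem_powerset, and_iff_right_iff_imp]
  rintro ⟨h1, h2⟩ c hc
  simp only [Finset.mem_product, Finset.mem_univ, true_and, Finset.mem_range]
  exact lt_of_lt_of_le (h1.1 c hc) (Finset.le_sup (Finset.mem_univ c.1))

lemma rookNum_eq {n : ℕ} (b : Fin n → ℕ) (k : ℕ) :
    rookNum b k = (placements b k).card := by
  rw [rookNum, ← Set.ncard_coe_finset]
  congr 1
  ext P
  simp [mem_placements]

lemma rookNum_zero {n : ℕ} (b : Fin n → ℕ) : rookNum b 0 = 1 := by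
  rw [rookNum_eq]
  have : placements b 0 = {∅} := by
    ext P
    simp only [mem_placements, Finset.mem_singleton, Finset.card_eq_zero]
    constructor
    · rintro ⟨-, h⟩; exact h
    · rintro rfl
      exact ⟨⟨fun c hc => absurd hc (Finset.notMem_empty c),
        fun c hc => absurd hc (Finset.notMem_empty c)⟩, rfl⟩
  rw [this, Finset.card_singleton]

lemma card_le_of_placement {n : ℕ} {b : Fin n → ℕ} {P : Finset (Fin n × ℕ)}
    (hP : IsRookPlacement b P) : P.card ≤ n := by
  have : P.card ≤ (Finset.univ : Finset (Fin n)).card := by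
    apply Finset.card_le_card_of_injOn (fun c => c.1) (fun c _ => Finset.mem_univ _)
    intro c hc d hd h
    by_contra hne
    exact (hP.2 c hc d hd hne).1 h
  simpa using this

lemma rookNum_eq_zero {n : ℕ} (b : Fin n → ℕ) {k : ℕ} (hk : n < k) : rookNum b k = 0 := by
  rw [rookNum_eq, Finset.card_eq_zero]
  ext P
  simp only [mem_placements, Finset.notMem_empty, iff_false, not_and]
  intro hP hc
  exact absurd (hc ▸ card_le_of_placement hP) (not_le.mpr hk)


variable {n : ℕ}

def emb : Fin n × ℕ → Fin (n + 1) × ℕ := fun c => (c.1.castSucc, c.2)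

lemma emb_inj : Function.Injective (emb (n := n)) := by
  rintro ⟨i, x⟩ ⟨j, y⟩ h
  simp only [emb, Prod.mk.injEq] at h
  exact Prod.ext (Fin.castSucc_injective _ h.1) h.2

lemma emb_fst_ne_last (c : Fin n × ℕ) : (emb c).1 ≠ Fin.last n :=
  (Fin.castSucc_lt_last c.1).ne

lemma down_exists {P : Finset (Fin (n + 1) × ℕ)} (hcol : ∀ c ∈ P, c.1 ≠ Fin.last n) :
    ∃ Q : Finset (Fin n × ℕ), Q.image emb = P := by
  classical
  refine ⟨P.attach.image (fun c => (Fin.castPred c.1.1 (hcol c.1 c.2), c.1.2)), ?_⟩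
  rw [Finset.image_image]
  have : (emb ∘ fun c : {x // x ∈ P} => (Fin.castPred c.1.1 (hcol c.1 c.2), c.1.2))
      = fun c => c.1 := by
    funext c
    simp [emb, Fin.castSucc_castPred]
  rw [this, Finset.attach_image_val]

lemma placement_subset {b : Fin n → ℕ} {P Q : Finset (Fin n × ℕ)} (h : Q ⊆ P)
    (hP : IsRookPlacement b P) : IsRookPlacement b Q :=
  ⟨fun c hc => hP.1 c (h hc), fun c hc d hd hne => hP.2 c (h hc) d (h hd) hne⟩

lemma placement_image_emb_iff {b : Fin (n + 1) → ℕ} {Q : Finset (Fin n × ℕ)} :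
    IsRookPlacement b (Q.image emb) ↔ IsRookPlacement (fun i => b i.castSucc) Q := by
  constructor
  · rintro ⟨h1, h2⟩
    constructor
    · intro c hc
      exact h1 (emb c) (Finset.mem_image_of_mem _ hc)
    · intro c hc d hd hne
      have := h2 (emb c) (Finset.mem_image_of_mem _ hc) (emb d)
        (Finset.mem_image_of_mem _ hd) (fun h => hne (emb_inj h))
      exact ⟨fun h => this.1 (by simp [emb, h]), this.2⟩
  · rintro ⟨h1, h2⟩
    constructor
    · intro c hc
      obtain ⟨a, ha, rfl⟩ := Finset.mem_image.mp hc
      exact h1 a ha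
    · intro c hc d hd hne
      obtain ⟨a, ha, rfl⟩ := Finset.mem_image.mp hc
      obtain ⟨a', ha', rfl⟩ := Finset.mem_image.mp hd
      have hne' : a ≠ a' := fun h => hne (by rw [h])
      have := h2 a ha a' ha' hne'
      exact ⟨fun h => this.1 (Fin.castSucc_injective _ h), this.2⟩

lemma rows_injOn {b : Fin n → ℕ} {Q : Finset (Fin n × ℕ)} (hQ : IsRookPlacement b Q) :
    Set.InjOn Prod.snd (Q : Set (Fin n × ℕ)) := by
  intro c hc d hd h
  by_contra hne
  exact (hQ.2 c hc d hd hne).2 h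

lemma rows_subset {b : Fin (n + 1) → ℕ} (hb : Monotone b) {Q : Finset (Fin n × ℕ)}
    (hQ : IsRookPlacement (fun i => b i.castSucc) Q) :
    Q.image Prod.snd ⊆ Finset.range (b (Fin.last n)) := by
  intro j hj
  obtain ⟨a, ha, rfl⟩ := Finset.mem_image.mp hj
  exact Finset.mem_range.mpr (lt_of_lt_of_le (hQ.1 a ha) (hb (Fin.le_last _)))

lemma le_of_rookNum_ne_zero {b : Fin (n + 1) → ℕ} (hb : Monotone b) {k : ℕ}
    (h : rookNum (fun i => b i.castSucc) k ≠ 0) : k ≤ b (Fin.last n) := by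
  rw [rookNum_eq] at h
  have h' : (placements (fun i => b i.castSucc) k).Nonempty := Finset.card_ne_zero.mp h
  obtain ⟨Q, hQ⟩ := h'
  rw [mem_placements] at hQ
  calc k = (Q.image Prod.snd).card := by
        rw [Finset.card_image_of_injOn (rows_injOn hQ.1), hQ.2]
    _ ≤ (Finset.range (b (Fin.last n))).card := Finset.card_le_card (rows_subset hb hQ.1)
    _ = b (Fin.last n) := Finset.card_range _

lemma rookNum_rec {b : Fin (n + 1) → ℕ} (hb : Monotone b) (k : ℕ) :
    rookNum b (k + 1) = rookNum (fun i => b i.castSucc) (k + 1)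
      + rookNum (fun i => b i.castSucc) k * (b (Fin.last n) - k) := by
  classical
  set b' := fun i : Fin n => b i.castSucc with hb'
  set L := Fin.last n with hL
  rw [rookNum_eq, rookNum_eq, rookNum_eq]
  set A := placements b (k + 1) with hA
  have hsplit := Finset.card_filter_add_card_filter_not
    (s := A) (p := fun P => ∀ c ∈ P, c.1 ≠ L)
  rw [← hsplit]
  congr 1
  · -- no rook in last column
    refine (Finset.card_bij (fun Q _ => Q.image emb) ?_ ?_ ?_).symm
    · intro Q hQ
      rw [mem_placements] at hQ
      rw [Finset.mem_filter, mem_placements]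
      refine ⟨⟨placement_image_emb_iff.mpr hQ.1, ?_⟩, ?_⟩
      · rw [Finset.card_image_of_injective _ emb_inj, hQ.2]
      · intro c hc
        obtain ⟨a, _, rfl⟩ := Finset.mem_image.mp hc
        exact emb_fst_ne_last a
    · intro Q₁ h₁ Q₂ h₂ h
      exact Finset.image_injective emb_inj h
    · intro P hP
      rw [Finset.mem_filter, mem_placements] at hP
      obtain ⟨Q, rfl⟩ := down_exists hP.2
      refine ⟨Q, ?_, rfl⟩
      rw [mem_placements]
      refine ⟨placement_image_emb_iff.mp hP.1.1, ?_⟩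
      rw [← Finset.card_image_of_injective Q emb_inj, hP.1.2]
  · -- a rook in the last column
    have hcnt : ∀ Q ∈ placements b' k,
        (Finset.range (b L) \ Q.image Prod.snd).card = b L - k := by
      intro Q hQ
      rw [mem_placements] at hQ
      rw [Finset.card_sdiff_of_subset (rows_subset hb hQ.1), Finset.card_range,
        Finset.card_image_of_injOn (rows_injOn hQ.1), hQ.2]
    have hcard : ((placements b' k).sigma
        (fun Q => Finset.range (b L) \ Q.image Prod.snd)).card
        = (placements b' k).card * (b L - k) := by
      rw [Finset.card_sigma]
      rw [Finset.sum_congr rfl hcnt, Finset.sum_const, smul_eq_mul]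
    rw [← hcard]
    refine (Finset.card_bij (fun x _ => insert (L, x.2) (x.1.image emb)) ?_ ?_ ?_).symm
    · rintro ⟨Q, j⟩ hx
      rw [Finset.mem_sigma, mem_placements] at hx
      obtain ⟨⟨hQpl, hQcard⟩, hj⟩ := hx
      rw [Finset.mem_sdiff, Finset.mem_range] at hj
      have hnotmem : (L, j) ∉ Q.image emb := by
        intro h
        obtain ⟨a, _, ha⟩ := Finset.mem_image.mp h
        exact emb_fst_ne_last a (congrArg Prod.fst ha)
      rw [Finset.mem_filter, mem_placements]
      have himg := placement_image_emb_iff.mpr hQpl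
      refine ⟨⟨⟨?_, ?_⟩, ?_⟩, ?_⟩
      · intro c hc
        rcases Finset.mem_insert.mp hc with rfl | hc
        · exact hj.1
        · exact himg.1 c hc
      · intro c hc d hd hne
        rcases Finset.mem_insert.mp hc with rfl | hc <;>
          rcases Finset.mem_insert.mp hd with rfl | hd
        · exact absurd rfl hne
        · obtain ⟨a, ha, rfl⟩ := Finset.mem_image.mp hd
          refine ⟨fun h => emb_fst_ne_last a h.symm, fun h => ?_⟩
          exact hj.2 (Finset.mem_image.mpr ⟨a, ha, h.symm⟩)
        · obtain ⟨a, ha, rfl⟩ := Finset.mem_image.mp hc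
          refine ⟨fun h => emb_fst_ne_last a h, fun h => ?_⟩
          exact hj.2 (Finset.mem_image.mpr ⟨a, ha, h⟩)
        · exact himg.2 c hc d hd hne
      · rw [Finset.card_insert_of_notMem hnotmem,
          Finset.card_image_of_injective _ emb_inj, hQcard]
      · intro hall
        exact hall (L, j) (Finset.mem_insert_self _ _) rfl
    · rintro ⟨Q₁, j₁⟩ h₁ ⟨Q₂, j₂⟩ h₂ h
      dsimp only at h
      rw [Finset.mem_sigma, mem_placements] at h₁ h₂
      have hnm : ∀ (Q : Finset (Fin n × ℕ)) (j : ℕ), (L, j) ∉ Q.image emb := by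
        intro Q j h
        obtain ⟨a, _, ha⟩ := Finset.mem_image.mp h
        exact emb_fst_ne_last a (congrArg Prod.fst ha)
      have hj : j₁ = j₂ := by
        have : (L, j₂) ∈ insert (L, j₁) (Q₁.image emb) := by
          rw [h]; exact Finset.mem_insert_self _ _
        rcases Finset.mem_insert.mp this with h' | h'
        · exact (congrArg Prod.snd h').symm
        · exact absurd h' (hnm _ _)
      subst hj
      have : Q₁.image emb = Q₂.image emb := by
        have e1 := Finset.erase_insert (hnm Q₁ j₁)
        have e2 := Finset.erase_insert (hnm Q₂ j₁)
        rw [← e1, ← e2, h]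
      have : Q₁ = Q₂ := Finset.image_injective emb_inj this
      subst this; rfl
    · intro P hP
      rw [Finset.mem_filter, mem_placements] at hP
      obtain ⟨⟨hPpl, hPcard⟩, hex⟩ := hP
      push_neg at hex
      obtain ⟨c₀, hc₀, hc₀L⟩ := hex
      have hcol : ∀ c ∈ P.erase c₀, c.1 ≠ L := by
        intro c hc
        rw [Finset.mem_erase] at hc
        intro h
        exact (hPpl.2 c hc.2 c₀ hc₀ hc.1).1 (h.trans hc₀L.symm)
      obtain ⟨Q, hQ⟩ := down_exists hcol
      have hQpl : IsRookPlacement b' Q :=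
        placement_image_emb_iff.mp (hQ ▸ placement_subset (Finset.erase_subset _ _) hPpl)
      have hQcard : Q.card = k := by
        rw [← Finset.card_image_of_injective Q emb_inj, hQ,
          Finset.card_erase_of_mem hc₀, hPcard]
        omega
      refine ⟨⟨Q, c₀.2⟩, ?_, ?_⟩
      · rw [Finset.mem_sigma, mem_placements, Finset.mem_sdiff, Finset.mem_range]
        refine ⟨⟨hQpl, hQcard⟩, hc₀L ▸ hPpl.1 c₀ hc₀, ?_⟩
        intro hmem
        obtain ⟨a, ha, ha2⟩ := Finset.mem_image.mp hmem
        have : emb a ∈ P.erase c₀ := hQ ▸ Finset.mem_image_of_mem emb ha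
        rw [Finset.mem_erase] at this
        exact (hPpl.2 (emb a) this.2 c₀ hc₀ this.1).2 ha2
      · show insert (L, c₀.2) (Q.image emb) = P
        rw [hQ]
        have h2 : (L, c₀.2) = c₀ := by rw [← hc₀L]
        rw [h2, Finset.insert_erase hc₀]

lemma rookNum_rec_int {n : ℕ} {b : Fin (n + 1) → ℕ} (hb : Monotone b) (k : ℕ) :
    (rookNum b (k + 1) : ℤ) = rookNum (fun i => b i.castSucc) (k + 1)
      + rookNum (fun i => b i.castSucc) k * ((b (Fin.last n) : ℤ) - k) := by
  rw [rookNum_rec hb k]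
  by_cases h : rookNum (fun i => b i.castSucc) k = 0
  · simp [h]
  · have hk := le_of_rookNum_ne_zero hb h
    rw [Nat.cast_add, Nat.cast_mul, Nat.cast_sub hk]

lemma polyId : ∀ {n : ℕ} (b : Fin n → ℕ), Monotone b →
    ∏ i : Fin n, (X - C (rootVec b i)) =
      ∑ k ∈ Finset.range (n + 1), C ((rookNum b k : ℤ)) * descPochhammer ℤ (n - k)
  | 0, b, hb => by
    simp [rookNum_zero, descPochhammer_zero]
  | (n + 1), b, hb => by
    set b' : Fin n → ℕ := fun i => b i.castSucc with hb'def
    have hb'mono : Monotone b' := fun i j h => hb (Fin.castSucc_le_castSucc_iff.mpr h)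
    set B : ℤ := (b (Fin.last n) : ℤ) with hBdef
    have hroot : rootVec b (Fin.last n) = (n : ℤ) - B := by
      simp [rootVec, Fin.val_last, hBdef]
    have hrootc : ∀ i : Fin n, rootVec b i.castSucc = rootVec b' i := by
      intro i; simp [rootVec, hb'def, Fin.coe_castSucc]
    have ih := polyId b' hb'mono
    rw [Fin.prod_univ_castSucc]
    simp only [hrootc]
    rw [ih, hroot]
    have hzero : (rookNum b' (n + 1) : ℤ) = 0 := by
      rw [rookNum_eq_zero b' (Nat.lt_succ_self n)]; rfl
    have key : ∀ k ∈ Finset.range (n + 1),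
        C ((rookNum b' k : ℤ)) * descPochhammer ℤ (n - k) * (X - C ((n : ℤ) - B)) =
          C ((rookNum b' k : ℤ)) * descPochhammer ℤ (n + 1 - k)
          + C ((rookNum b' k : ℤ)) * C (B - k) * descPochhammer ℤ (n - k) := by
      intro k hk
      have hk' : k ≤ n := Nat.lt_succ_iff.mp (Finset.mem_range.mp hk)
      have h1 : descPochhammer ℤ (n - k) * (X - (((n - k : ℕ) : ℤ[X]))) =
          descPochhammer ℤ (n + 1 - k) := by
        rw [← descPochhammer_succ_right]
        congr 1
        omega
      have h2 : X - C ((n : ℤ) - B) = (X - (((n - k : ℕ) : ℤ[X]))) + C (B - (k : ℤ)) := by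
        simp only [map_sub, Polynomial.C_eq_natCast]
        push_cast [Nat.cast_sub hk']
        ring
      rw [h2, mul_add, mul_assoc, h1]
      ring
    have crec : ∀ k, C ((rookNum b (k + 1) : ℤ)) =
        C ((rookNum b' (k + 1) : ℤ)) + C ((rookNum b' k : ℤ)) * C (B - k) := by
      intro k
      rw [← map_mul, ← map_add]
      exact congrArg C (rookNum_rec_int hb k)
    have hL1 : ∑ k ∈ Finset.range (n + 1), C ((rookNum b' k : ℤ)) * descPochhammer ℤ (n + 1 - k)
        = ∑ k ∈ Finset.range (n + 1), C ((rookNum b' (k + 1) : ℤ)) * descPochhammer ℤ (n - k)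
          + descPochhammer ℤ (n + 1) := by
      have e1 : ∑ k ∈ Finset.range (n + 1), C ((rookNum b' k : ℤ)) * descPochhammer ℤ (n + 1 - k)
          = ∑ k ∈ Finset.range (n + 2), C ((rookNum b' k : ℤ)) * descPochhammer ℤ (n + 1 - k) := by
        rw [Finset.sum_range_succ (fun k => C ((rookNum b' k : ℤ)) * descPochhammer ℤ (n + 1 - k)) (n + 1)]
        rw [hzero, map_zero, zero_mul, add_zero]
      rw [e1, Finset.sum_range_succ' (fun k => C ((rookNum b' k : ℤ)) * descPochhammer ℤ (n + 1 - k)) (n + 1)]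
      simp only [Nat.succ_sub_succ, Nat.sub_zero, rookNum_zero, Nat.cast_one, map_one, one_mul]
    have hR : ∑ k ∈ Finset.range (n + 2), C ((rookNum b k : ℤ)) * descPochhammer ℤ (n + 1 - k)
        = ∑ k ∈ Finset.range (n + 1), C ((rookNum b' (k + 1) : ℤ)) * descPochhammer ℤ (n - k)
          + ∑ k ∈ Finset.range (n + 1), C ((rookNum b' k : ℤ)) * C (B - k) * descPochhammer ℤ (n - k)
          + descPochhammer ℤ (n + 1) := by
      rw [Finset.sum_range_succ' (fun k => C ((rookNum b k : ℤ)) * descPochhammer ℤ (n + 1 - k)) (n + 1)]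
      simp only [Nat.succ_sub_succ, Nat.sub_zero, rookNum_zero, Nat.cast_one, map_one, one_mul]
      rw [Finset.sum_congr rfl (fun k (_ : k ∈ Finset.range (n + 1)) => by rw [crec k, add_mul])]
      rw [Finset.sum_add_distrib]
    rw [hR, Finset.sum_mul, Finset.sum_congr rfl key, Finset.sum_add_distrib, hL1]
    ring

lemma coeff_ext {n : ℕ} {c d : ℕ → ℕ}
    (h : ∑ k ∈ Finset.range (n + 1), C ((c k : ℤ)) * descPochhammer ℤ (n - k)
       = ∑ k ∈ Finset.range (n + 1), C ((d k : ℤ)) * descPochhammer ℤ (n - k)) :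
    ∀ k ≤ n, c k = d k := by
  have heval : ∀ j : ℕ, ∑ k ∈ Finset.range (n + 1), (c k : ℤ) * (j.descFactorial (n - k) : ℤ)
      = ∑ k ∈ Finset.range (n + 1), (d k : ℤ) * (j.descFactorial (n - k) : ℤ) := by
    intro j
    have := congrArg (Polynomial.eval ((j : ℤ))) h
    simpa [Polynomial.eval_finset_sum, descPochhammer_eval_eq_descFactorial] using this
  suffices H : ∀ j, j ≤ n → c (n - j) = d (n - j) by
    intro k hk
    have := H (n - k) (Nat.sub_le _ _)
    rwa [Nat.sub_sub_self hk] at this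
  intro j
  induction j using Nat.strong_induction_on with
  | _ j IH =>
    intro hj
    have h0 := heval j
    have hsum : ∑ k ∈ Finset.range (n + 1),
        ((c k : ℤ) - d k) * (j.descFactorial (n - k) : ℤ) = 0 := by
      simp only [sub_mul]
      rw [Finset.sum_sub_distrib, h0, sub_self]
    have hsingle : ∀ k ∈ Finset.range (n + 1), k ≠ n - j →
        ((c k : ℤ) - d k) * (j.descFactorial (n - k) : ℤ) = 0 := by
      intro k hk hkn
      rw [Finset.mem_range] at hk
      rcases lt_or_gt_of_ne hkn with hlt | hgt
      · have : j < n - k := by omega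
        rw [Nat.descFactorial_eq_zero_iff_lt.mpr this]
        simp
      · have hk' : k ≤ n := by omega
        have hcd : c k = d k := by
          have := IH (n - k) (by omega) (by omega)
          rwa [Nat.sub_sub_self hk'] at this
        rw [hcd, sub_self, zero_mul]
    have := Finset.sum_eq_single_of_mem (n - j) (Finset.mem_range.mpr (by omega)) hsingle
    rw [this] at hsum
    rw [Nat.sub_sub_self hj, Nat.descFactorial_self] at hsum
    have hfac : ((Nat.factorial j : ℕ) : ℤ) ≠ 0 := by
      exact_mod_cast (Nat.factorial_pos j).ne'
    have := mul_eq_zero.mp hsum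
    rcases this with h' | h'
    · have : ((c (n - j) : ℤ)) = d (n - j) := by linarith [sub_eq_zero.mp h']
      exact_mod_cast this
    · exact absurd h' hfac

lemma exists_perm_of_multiset_eq {n : ℕ} {f g : Fin n → ℤ}
    (h : Multiset.map f Finset.univ.val = Multiset.map g Finset.univ.val) :
    ∃ σ : Equiv.Perm (Fin n), ∀ i, f i = g (σ i) := by
  have hmap : ∀ (u : Fin n → ℤ) (σ : Equiv.Perm (Fin n)),
      Multiset.map (u ∘ σ) Finset.univ.val = Multiset.map u Finset.univ.val := by
    intro u σ
    rw [← Multiset.map_map, Multiset.map_univ_val_equiv]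
  have hperm : (List.ofFn (f ∘ Tuple.sort f)).Perm (List.ofFn (g ∘ Tuple.sort g)) := by
    rw [← Multiset.coe_eq_coe, ← Fin.univ_val_map, ← Fin.univ_val_map,
      hmap f (Tuple.sort f), hmap g (Tuple.sort g), h]
  have heq := List.Perm.eq_of_sortedLE
    (List.sortedLE_ofFn_iff.mpr (Tuple.monotone_sort f))
    (List.sortedLE_ofFn_iff.mpr (Tuple.monotone_sort g)) hperm
  have hfun : f ∘ Tuple.sort f = g ∘ Tuple.sort g := List.ofFn_injective heq
  refine ⟨(Tuple.sort f).symm.trans (Tuple.sort g), fun i => ?_⟩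
  have := congrFun hfun ((Tuple.sort f).symm i)
  simpa using this

lemma prod_eq_multiset {n : ℕ} (f : Fin n → ℤ) :
    ∏ i : Fin n, (X - C (f i)) =
      ((Multiset.map f Finset.univ.val).map (fun a => X - C a)).prod := by
  rw [Multiset.map_map]
  rfl

end GJW

open Polynomial in
theorem GJW.main {n : ℕ} (b₁ b₂ : Fin n → ℕ) (hb₁ : Monotone b₁) (hb₂ : Monotone b₂) :
    RookEquiv b₁ b₂ ↔
      ∃ σ : Equiv.Perm (Fin n), ∀ i, rootVec b₂ i = rootVec b₁ (σ i) := by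
  constructor
  · intro h
    have hpoly : ∏ i : Fin n, (X - C (rootVec b₁ i)) = ∏ i : Fin n, (X - C (rootVec b₂ i)) := by
      rw [polyId b₁ hb₁, polyId b₂ hb₂]
      exact Finset.sum_congr rfl (fun k _ => by rw [h k])
    have hms : Multiset.map (rootVec b₁) Finset.univ.val
        = Multiset.map (rootVec b₂) Finset.univ.val := by
      rw [prod_eq_multiset, prod_eq_multiset] at hpoly
      have := congrArg Polynomial.roots hpoly
      rwa [Polynomial.roots_multiset_prod_X_sub_C, Polynomial.roots_multiset_prod_X_sub_C]
        at this
    exact exists_perm_of_multiset_eq hms.symm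
  · rintro ⟨σ, hσ⟩
    have hms : Multiset.map (rootVec b₂) Finset.univ.val
        = Multiset.map (rootVec b₁) Finset.univ.val := by
      have hfe : rootVec b₂ = (rootVec b₁) ∘ σ := funext hσ
      rw [hfe, ← Multiset.map_map, Multiset.map_univ_val_equiv]
    have hpoly : ∏ i : Fin n, (X - C (rootVec b₁ i)) = ∏ i : Fin n, (X - C (rootVec b₂ i)) := by
      rw [prod_eq_multiset, prod_eq_multiset, hms]
    have hsum : ∑ k ∈ Finset.range (n + 1), C ((rookNum b₁ k : ℤ)) * descPochhammer ℤ (n - k)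
        = ∑ k ∈ Finset.range (n + 1), C ((rookNum b₂ k : ℤ)) * descPochhammer ℤ (n - k) := by
      rw [← polyId b₁ hb₁, ← polyId b₂ hb₂]
      exact hpoly
    have hext := coeff_ext hsum
    intro k
    by_cases hk : k ≤ n
    · exact hext k hk
    · rw [rookNum_eq_zero b₁ (by omega), rookNum_eq_zero b₂ (by omega)]

/-- Goldman–Joichi–White: two Ferrers boards with `n` columns are
rook equivalent if and only if one root vector is a rearrangement of the other. -/
theorem stmt14 {n : ℕ} (b₁ b₂ : Fin n → ℕ) (hb₁ : Monotone b₁) (hb₂ : Monotone b₂) :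
    RookEquiv b₁ b₂ ↔
      ∃ σ : Equiv.Perm (Fin n), ∀ i, rootVec b₂ i = rootVec b₁ (σ i) := by
  exact GJW.main b₁ b₂ hb₁ hb₂
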